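/- For all nonnegative integers n and j with j ≥ 1, the Legendre-Stirling number of the second kind satisfies the explicit formula {n brace j}_1 = Σ_{r=0}^{j} (-1)^{r+j} (2r+1)(r(r+1))^n / ((j-r)! (j+r+1)!). -/

import Mathlib

noncomputable def LS : ℕ → ℕ → ℝ
  | 0, 0 => 1
  | 0, _ + 1 => 0
  | _ + 1, 0 => 0
  | n + 1, j + 1 => LS n j + ((j:ℝ) + 1) * ((j:ℝ) + 2) * LS n (j + 1)

lemma factR_ne (k : ℕ) : (k.factorial : ℝ) ≠ 0 := by
  exact_mod_cast k.factorial_ne_zero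

lemma base_aux (j : ℕ) : ∀ m : ℕ, m ≤ j →
    (j : ℝ) * ∑ r ∈ Finset.range (m + 1),
      (-1 : ℝ) ^ r * (2 * r + 1) / ((Nat.factorial (j - r)) * (Nat.factorial (j + r + 1)))
    = (-1 : ℝ) ^ m * (m + 1) * ((j : ℝ) - m) /
        ((Nat.factorial (j - m)) * (Nat.factorial (j + m + 1))) := by
  intro m
  induction m with
  | zero =>
    intro _
    simp only [zero_add, Finset.sum_range_one, Nat.sub_zero, pow_zero, Nat.cast_zero, add_zero, mul_zero, sub_zero]
    field_simp
  | succ m ih =>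
    intro hm
    have hm' : m ≤ j := le_of_lt hm
    rw [Finset.sum_range_succ, mul_add, ih hm']
    have h1 : j - (m + 1) + 1 = j - m := by omega
    have h2 : (Nat.factorial (j - m) : ℝ) = ((j : ℝ) - m) * (Nat.factorial (j - (m + 1))) := by
      rw [← h1, Nat.factorial_succ]
      push_cast
      have : ((j - (m + 1) : ℕ) : ℝ) = (j : ℝ) - m - 1 := by
        rw [Nat.cast_sub hm]; push_cast; ring
      rw [this]; ring
    have h3 : (Nat.factorial (j + (m + 1) + 1) : ℝ)
        = ((j : ℝ) + m + 2) * (Nat.factorial (j + m + 1)) := by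
      have : j + (m + 1) + 1 = (j + m + 1) + 1 := by omega
      rw [this, Nat.factorial_succ]
      push_cast
      ring
    have hjm : ((j : ℝ) - m) ≠ 0 := by
      have : (m : ℝ) < j := by exact_mod_cast hm
      linarith
    rw [h2, h3]
    have e1 := factR_ne (j - (m+1))
    have e2 := factR_ne (j + m + 1)
    push_cast
    rw [pow_succ]
    field_simp
    ring

lemma base_zero (j : ℕ) (hj : 1 ≤ j) :
    ∑ r ∈ Finset.range (j + 1),
      (-1 : ℝ) ^ (r + j) * (2 * r + 1) /
        ((Nat.factorial (j - r)) * (Nat.factorial (j + r + 1))) = 0 := by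
  have key := base_aux j j le_rfl
  rw [sub_self, mul_zero, zero_div] at key
  have hj' : (j : ℝ) ≠ 0 := by exact_mod_cast Nat.one_le_iff_ne_zero.mp hj
  have hs : ∑ r ∈ Finset.range (j + 1),
      (-1 : ℝ) ^ r * (2 * r + 1) /
        ((Nat.factorial (j - r)) * (Nat.factorial (j + r + 1))) = 0 :=
    (mul_eq_zero.mp key).resolve_left hj'
  calc ∑ r ∈ Finset.range (j + 1),
      (-1 : ℝ) ^ (r + j) * (2 * r + 1) /
        ((Nat.factorial (j - r)) * (Nat.factorial (j + r + 1)))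
      = (-1 : ℝ) ^ j * ∑ r ∈ Finset.range (j + 1),
      (-1 : ℝ) ^ r * (2 * r + 1) /
        ((Nat.factorial (j - r)) * (Nat.factorial (j + r + 1))) := by
        rw [Finset.mul_sum]
        refine Finset.sum_congr rfl fun r _ => ?_
        rw [pow_add]
        ring
    _ = 0 := by rw [hs, mul_zero]

lemma step_term (n j r : ℕ) (h : r ≤ j) :
    (-1 : ℝ) ^ (r + (j + 1)) * (2 * r + 1) * ((r : ℝ) * (r + 1)) ^ (n + 1) /
        ((Nat.factorial (j + 1 - r)) * (Nat.factorial (j + 1 + r + 1)))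
    = ((j : ℝ) + 1) * ((j : ℝ) + 2) *
        ((-1 : ℝ) ^ (r + (j + 1)) * (2 * r + 1) * ((r : ℝ) * (r + 1)) ^ n /
          ((Nat.factorial (j + 1 - r)) * (Nat.factorial (j + 1 + r + 1))))
      + (-1 : ℝ) ^ (r + j) * (2 * r + 1) * ((r : ℝ) * (r + 1)) ^ n /
        ((Nat.factorial (j - r)) * (Nat.factorial (j + r + 1))) := by
  have h1 : j + 1 - r = (j - r) + 1 := by omega
  have h2 : j + 1 + r + 1 = (j + r + 1) + 1 := by omega
  have h3 : r + (j + 1) = (r + j) + 1 := by omega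
  rw [h1, h2, h3, Nat.factorial_succ, Nat.factorial_succ, pow_succ, pow_succ]
  have hc : ((j - r : ℕ) : ℝ) = (j : ℝ) - r := Nat.cast_sub h
  have hrj : (r : ℝ) ≤ (j : ℝ) := by exact_mod_cast h
  have e1 := factR_ne (j - r)
  have e2 := factR_ne (j + r + 1)
  have e3 : ((j : ℝ) - r + 1) ≠ 0 := by linarith
  have e4 : ((j : ℝ) + r + 2) ≠ 0 := by positivity
  push_cast [hc]
  field_simp
  ring

lemma ls_formula : ∀ n j : ℕ, LS n j = ∑ r ∈ Finset.range (j + 1),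
      (-1 : ℝ) ^ (r + j) * (2 * r + 1) * ((r : ℝ) * (r + 1)) ^ n /
        ((Nat.factorial (j - r)) * (Nat.factorial (j + r + 1))) := by
  intro n
  induction n with
  | zero =>
    intro j
    match j with
    | 0 =>
      rw [Finset.sum_range_one]
      norm_num [LS]
    | j + 1 =>
      show (0 : ℝ) = _
      rw [eq_comm]
      calc ∑ r ∈ Finset.range (j + 1 + 1),
          (-1 : ℝ) ^ (r + (j + 1)) * (2 * r + 1) * ((r : ℝ) * (r + 1)) ^ 0 /
            ((Nat.factorial (j + 1 - r)) * (Nat.factorial (j + 1 + r + 1)))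
          = ∑ r ∈ Finset.range (j + 1 + 1),
          (-1 : ℝ) ^ (r + (j + 1)) * (2 * r + 1) /
            ((Nat.factorial (j + 1 - r)) * (Nat.factorial (j + 1 + r + 1))) := by
            refine Finset.sum_congr rfl fun r _ => ?_
            rw [pow_zero, mul_one]
        _ = 0 := base_zero (j + 1) (Nat.le_add_left 1 j)
  | succ n ih =>
    intro j
    match j with
    | 0 =>
      show (0 : ℝ) = _
      rw [Finset.sum_range_one]
      norm_num
    | j + 1 =>
      show LS n j + ((j:ℝ) + 1) * ((j:ℝ) + 2) * LS n (j + 1) = _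
      rw [ih j, ih (j + 1)]
      have hsum : ∑ r ∈ Finset.range (j + 1 + 1),
            (-1 : ℝ) ^ (r + (j + 1)) * (2 * r + 1) * ((r : ℝ) * (r + 1)) ^ (n + 1) /
              ((Nat.factorial (j + 1 - r)) * (Nat.factorial (j + 1 + r + 1)))
          = (∑ r ∈ Finset.range (j + 1),
            (((j : ℝ) + 1) * ((j : ℝ) + 2) *
              ((-1 : ℝ) ^ (r + (j + 1)) * (2 * r + 1) * ((r : ℝ) * (r + 1)) ^ n /
                ((Nat.factorial (j + 1 - r)) * (Nat.factorial (j + 1 + r + 1))))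
            + (-1 : ℝ) ^ (r + j) * (2 * r + 1) * ((r : ℝ) * (r + 1)) ^ n /
              ((Nat.factorial (j - r)) * (Nat.factorial (j + r + 1)))))
            + (-1 : ℝ) ^ ((j + 1) + (j + 1)) * (2 * ((j + 1 : ℕ) : ℝ) + 1) *
              (((j + 1 : ℕ) : ℝ) * (((j + 1 : ℕ) : ℝ) + 1)) ^ (n + 1) /
              ((Nat.factorial (j + 1 - (j + 1))) * (Nat.factorial (j + 1 + (j + 1) + 1))) := by
        rw [Finset.sum_range_succ]
        congr 1
        refine Finset.sum_congr rfl fun r hr => ?_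
        exact step_term n j r (Nat.lt_succ_iff.mp (Finset.mem_range.mp hr))
      rw [hsum, Finset.sum_add_distrib, ← Finset.mul_sum,
        Finset.sum_range_succ (n := j + 1)]
      push_cast
      rw [pow_succ]
      ring

theorem ls_explicit (n j : ℕ) (hj : 1 ≤ j) :
    LS n j = ∑ r ∈ Finset.range (j + 1),
      (-1 : ℝ) ^ (r + j) * (2 * r + 1) * ((r : ℝ) * (r + 1)) ^ n /
        ((Nat.factorial (j - r)) * (Nat.factorial (j + r + 1))) := by
  exact ls_formula n j
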